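/- Let a, b, c ∈ ℂ with a ≠ 0 satisfy conj(a)·b + conj(c)·a = 0, conj(b)·c + conj(c)·b = 0, and |a|² + |b|² + |c|² = 1. Then there exist real numbers θ, φ and a sign ε ∈ {+1, −1} such that a = e^{iθ} cos φ, b = e^{iθ}((1 + iε)/2) sin φ, and c = −e^{iθ}((1 − iε)/2) sin φ. -/

import Mathlib

/-- Every solution with `a ≠ 0` of the unitarity conditions `conj(a)b + conj(c)a = 0`,
`conj(b)c + conj(c)b = 0`, `|a|² + |b|² + |c|² = 1` is, up to a global phase `e^{iθ}`,
of the form `a = e^{iθ} cos φ`, `b = e^{iθ}((1 + iε)/2) sin φ`,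
`c = −e^{iθ}((1 − iε)/2) sin φ` with `ε ∈ {+1, −1}`. -/
theorem case_two_coefficients_classification (a b c : ℂ) (ha : a ≠ 0)
    (h1 : (starRingEnd ℂ) a * b + (starRingEnd ℂ) c * a = 0)
    (h2 : (starRingEnd ℂ) b * c + (starRingEnd ℂ) c * b = 0)
    (hnorm : ‖a‖ ^ 2 + ‖b‖ ^ 2 + ‖c‖ ^ 2 = 1) :
    ∃ θ φ ε : ℝ, (ε = 1 ∨ ε = -1) ∧
      a = Complex.exp (θ * Complex.I) * Real.cos φ ∧
      b = Complex.exp (θ * Complex.I) * ((1 + Complex.I * ε) / 2) * Real.sin φ ∧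
      c = -(Complex.exp (θ * Complex.I) * ((1 - Complex.I * ε) / 2) * Real.sin φ) := by
  obtain ⟨θ, hθ⟩ : ∃ θ : ℝ, θ = a.arg := ⟨_, rfl⟩
  obtain ⟨E, hEdef⟩ : ∃ E : ℂ, E = Complex.exp ((θ : ℂ) * Complex.I) := ⟨_, rfl⟩
  obtain ⟨r, hrdef⟩ : ∃ r : ℝ, r = ‖a‖ := ⟨_, rfl⟩
  have hEa : a = (r : ℂ) * E := by
    rw [hrdef, hEdef, hθ]; exact (Complex.norm_mul_exp_arg_mul_I a).symm
  have hEabs : ‖E‖ = 1 := by rw [hEdef]; exact Complex.norm_exp_ofReal_mul_I θ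
  have hEunit : E * (starRingEnd ℂ) E = 1 := by
    rw [Complex.mul_conj]
    norm_cast
    rw [Complex.normSq_eq_norm_sq, hEabs, one_pow]
  have hrne : r ≠ 0 := by rw [hrdef]; exact norm_ne_zero_iff.mpr ha
  have hr0 : (r : ℂ) ≠ 0 := Complex.ofReal_ne_zero.mpr hrne
  have hconja : (starRingEnd ℂ) a = (r : ℂ) * (starRingEnd ℂ) E := by
    rw [hEa, map_mul, Complex.conj_ofReal]
  have h1' : (r : ℂ) * (starRingEnd ℂ) E * b
      + (starRingEnd ℂ) c * ((r : ℂ) * E) = 0 := by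
    rw [← hconja, ← hEa]; exact h1
  have hb : b = -((starRingEnd ℂ) c) * (E * E) := by
    have key : (r : ℂ) * (b + (starRingEnd ℂ) c * (E * E)) = 0 := by
      linear_combination E * h1' - ((r : ℂ) * b) * hEunit
    have h0 := (mul_eq_zero.mp key).resolve_left hr0
    linear_combination h0
  have hcb : (starRingEnd ℂ) b = -c * ((starRingEnd ℂ) E * (starRingEnd ℂ) E) := by
    rw [hb]
    simp only [map_mul, map_neg, Complex.conj_conj]
  obtain ⟨w, hwdef⟩ : ∃ w : ℂ, w = c * (starRingEnd ℂ) E := ⟨_, rfl⟩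
  have hcw : (starRingEnd ℂ) w = (starRingEnd ℂ) c * E := by
    rw [hwdef, map_mul, Complex.conj_conj]
  have hb' : b = -((starRingEnd ℂ) w) * E := by
    rw [hb, hcw]; ring
  have hw2 : w ^ 2 + (starRingEnd ℂ) (w ^ 2) = 0 := by
    have h2' := h2
    rw [hcb, hb] at h2'
    rw [map_pow, hcw, hwdef]
    linear_combination -h2'
  have hre : (w ^ 2).re = 0 := by
    have h := congrArg Complex.re hw2
    simp only [Complex.add_re, Complex.conj_re, Complex.zero_re] at h
    linarith
  have huv : w.re ^ 2 - w.im ^ 2 = 0 := by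
    have h : (w ^ 2).re = w.re * w.re - w.im * w.im := by
      rw [pow_two, Complex.mul_re]
    nlinarith [hre, h]
  obtain ⟨s, hs⟩ : ∃ s : ℝ, s = -2 * w.re := ⟨_, rfl⟩
  have habsw : ‖w‖ = ‖c‖ := by
    rw [hwdef, norm_mul, Complex.norm_conj, hEabs, mul_one]
  have habsb : ‖b‖ = ‖c‖ := by
    rw [hb', ← habsw]
    rw [show -((starRingEnd ℂ) w) * E = -((starRingEnd ℂ) w * E) by ring]
    rw [norm_neg, norm_mul, Complex.norm_conj, hEabs, mul_one]
  have habsc2 : ‖c‖ ^ 2 = w.re ^ 2 + w.im ^ 2 := by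
    rw [← habsw, Complex.sq_norm, Complex.normSq_apply]; ring
  have hrs : r ^ 2 + s ^ 2 = 1 := by
    have hs2 : s ^ 2 = 4 * w.re ^ 2 := by rw [hs]; ring
    have hb2 : ‖b‖ ^ 2 = ‖c‖ ^ 2 := by rw [habsb]
    rw [hrdef]
    nlinarith [hnorm]
  obtain ⟨z, hz⟩ : ∃ z : ℂ, z = (r : ℂ) + (s : ℂ) * Complex.I := ⟨_, rfl⟩
  have hzre : z.re = r := by rw [hz]; simp
  have hzim : z.im = s := by rw [hz]; simp
  have hzabs : ‖z‖ = 1 := by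
    have h1 : ‖z‖ ^ 2 = 1 := by
      rw [Complex.sq_norm, Complex.normSq_apply, hzre, hzim]
      nlinarith [hrs]
    nlinarith [norm_nonneg z]
  have hzne : z ≠ 0 := by
    intro h; rw [h] at hzabs; simp at hzabs
  have hcos : Real.cos z.arg = r := by
    rw [Complex.cos_arg hzne, hzre, hzabs, div_one]
  have hsin : Real.sin z.arg = s := by
    rw [Complex.sin_arg, hzim, hzabs, div_one]
  have hc : c = w * E := by
    rw [hwdef]
    calc c = c * (E * (starRingEnd ℂ) E) := by rw [hEunit, mul_one]
    _ = c * (starRingEnd ℂ) E * E := by ring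
  have hwre : w = (w.re : ℂ) + (w.im : ℂ) * Complex.I := (Complex.re_add_im w).symm
  have hcwre : (starRingEnd ℂ) w = (w.re : ℂ) - (w.im : ℂ) * Complex.I := by
    simp [Complex.ext_iff]
  have hcases : w.im = -w.re ∨ w.im = w.re := by
    have h : (w.im + w.re) * (w.im - w.re) = 0 := by linear_combination -huv
    rcases mul_eq_zero.mp h with h | h
    · left; linarith
    · right; linarith
  rcases hcases with him | him
  · refine ⟨θ, z.arg, 1, Or.inl rfl, ?_, ?_, ?_⟩
    · rw [← hEdef, hcos, hEa]; ring
    · rw [← hEdef, hb', hcwre, hsin, him, hs]; push_cast; ring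
    · rw [← hEdef, hc, hwre, hsin, him, hs]; push_cast; ring
  · refine ⟨θ, z.arg, -1, Or.inr rfl, ?_, ?_, ?_⟩
    · rw [← hEdef, hcos, hEa]; ring
    · rw [← hEdef, hb', hcwre, hsin, him, hs]; push_cast; ring
    · rw [← hEdef, hc, hwre, hsin, him, hs]; push_cast; ring
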